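/- If f is continuous on [0,δ], thrice differentiable on (0,δ], f(0) = 0, and f''' is strictly decreasing on (0,δ], then lim_{w→0⁺} f''(w) < g₂ = g''(0), where g₂ = -6f(δ)/δ² + 6f'(δ)/δ - 2f''(δ). -/

import Mathlib

open Filter Set

private lemma poly3deriv (a b c : ℝ) (x : ℝ) :
    HasDerivAt (fun w : ℝ => a*w^3 + b*w^2 + c*w) (3*a*x^2 + 2*b*x + c) x := by
  have h := (((hasDerivAt_pow 3 x).const_mul a).add ((hasDerivAt_pow 2 x).const_mul b)).add
    ((hasDerivAt_id x).const_mul c)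
  refine h.congr_deriv ?_
  push_cast
  ring_nf

private lemma poly2deriv (a b c : ℝ) (x : ℝ) :
    HasDerivAt (fun w : ℝ => 3*a*w^2 + 2*b*w + c) (6*a*x + 2*b) x := by
  have h := (((hasDerivAt_pow 2 x).const_mul (3*a)).add ((hasDerivAt_id x).const_mul (2*b))).add
    (hasDerivAt_const x c)
  refine h.congr_deriv ?_
  push_cast
  ring_nf

private lemma poly1deriv (a b : ℝ) (x : ℝ) :
    HasDerivAt (fun w : ℝ => 6*a*w + 2*b) (6*a) x := by
  have h := ((hasDerivAt_id x).const_mul (6*a)).add (hasDerivAt_const x (2*b))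
  refine h.congr_deriv ?_
  ring

set_option maxHeartbeats 1000000 in
theorem stmt_6 (f : ℝ → ℝ) (δ : ℝ) (hδ : 0 < δ) (hf0 : f 0 = 0)
    (hcont : ContinuousOn f (Set.Icc 0 δ))
    (hdiff : ∀ w ∈ Set.Ioc (0:ℝ) δ, DifferentiableAt ℝ f w ∧
      DifferentiableAt ℝ (deriv f) w ∧ DifferentiableAt ℝ (deriv (deriv f)) w)
    (hanti : StrictAntiOn (deriv (deriv (deriv f))) (Set.Ioc 0 δ))
    (L : EReal)
    (hL : Filter.Tendsto (fun w : ℝ => (((deriv (deriv f) w : ℝ) : EReal)))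
      (nhdsWithin 0 (Set.Ioi 0)) (nhds L)) :
    L < ((-6 * f δ / δ ^ 2 + 6 * deriv f δ / δ - 2 * deriv (deriv f) δ : ℝ) : EReal) := by
  by_contra hcon
  push_neg at hcon
  have hδ0 : (δ : ℝ) ≠ 0 := ne_of_gt hδ
  set g2 : ℝ := -6 * f δ / δ ^ 2 + 6 * deriv f δ / δ - 2 * deriv (deriv f) δ with hg2
  set A : ℝ := deriv (deriv f) δ / (2*δ) - deriv f δ / δ^2 + f δ / δ^3 with hA
  set B : ℝ := g2 / 2 with hB
  set C : ℝ := deriv f δ - 3*A*δ^2 - 2*B*δ with hC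
  set E0 : ℝ → ℝ := fun w => f w - (A*w^3 + B*w^2 + C*w) with hE0
  set E1 : ℝ → ℝ := fun w => deriv f w - (3*A*w^2 + 2*B*w + C) with hE1
  set E2 : ℝ → ℝ := fun w => deriv (deriv f) w - (6*A*w + 2*B) with hE2
  -- boundary values
  have hE2δ : E2 δ = 0 := by
    simp only [hE2, hA, hB, hg2]; field_simp; ring
  have hE1δ : E1 δ = 0 := by simp only [hE1, hC]; ring
  have hE0δ : E0 δ = 0 := by
    simp only [hE0, hA, hB, hC, hg2]; field_simp; ring
  -- derivative facts
  have hD2 : ∀ x ∈ Ioo (0:ℝ) δ, HasDerivAt E2 (deriv (deriv (deriv f)) x - 6*A) x := by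
    intro x hx
    exact ((hdiff x ⟨hx.1, hx.2.le⟩).2.2.hasDerivAt).sub (poly1deriv A B x)
  have hD1 : ∀ x ∈ Ioo (0:ℝ) δ, HasDerivAt E1 (E2 x) x := by
    intro x hx
    exact ((hdiff x ⟨hx.1, hx.2.le⟩).2.1.hasDerivAt).sub (poly2deriv A B C x)
  have hD0 : ∀ x ∈ Ioo (0:ℝ) δ, HasDerivAt E0 (E1 x) x := by
    intro x hx
    exact ((hdiff x ⟨hx.1, hx.2.le⟩).1.hasDerivAt).sub (poly3deriv A B C x)
  -- continuity facts
  have hC2 : ContinuousOn E2 (Ioc 0 δ) := by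
    intro x hx
    exact (((hdiff x hx).2.2.continuousAt).sub (by fun_prop)).continuousWithinAt
  have hC1 : ContinuousOn E1 (Ioc 0 δ) := by
    intro x hx
    exact (((hdiff x hx).2.1.continuousAt).sub (by fun_prop)).continuousWithinAt
  have hC0Icc : ContinuousOn E0 (Icc 0 δ) :=
    hcont.sub (by fun_prop)
  -- chord inequality from two mean value theorems and strict antitonicity of f'''
  have chord : ∀ u ∈ Ioo (0:ℝ) δ, ∀ w ∈ Ioo u δ, E2 u * (δ - w) < E2 w * (δ - u) := by
    intro u hu w hw
    have huw : u < w := hw.1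
    have hwδ : w < δ := hw.2
    have hsub1 : Icc u w ⊆ Ioc 0 δ := fun x hx => ⟨lt_of_lt_of_le hu.1 hx.1, hx.2.trans hwδ.le⟩
    have hsub2 : Icc w δ ⊆ Ioc 0 δ := fun x hx => ⟨lt_of_lt_of_le (hu.1.trans huw) hx.1, hx.2⟩
    obtain ⟨ξ₁, hξ₁, h1⟩ := exists_hasDerivAt_eq_slope E2
      (fun x => deriv (deriv (deriv f)) x - 6*A) huw (hC2.mono hsub1)
      (fun x hx => hD2 x ⟨hu.1.trans hx.1, hx.2.trans hwδ⟩)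
    obtain ⟨ξ₂, hξ₂, h2⟩ := exists_hasDerivAt_eq_slope E2
      (fun x => deriv (deriv (deriv f)) x - 6*A) hwδ (hC2.mono hsub2)
      (fun x hx => hD2 x ⟨huw.trans hx.1 |>.trans' hu.1, hx.2⟩)
    have hmem1 : ξ₁ ∈ Ioc (0:ℝ) δ := ⟨hu.1.trans hξ₁.1, (hξ₁.2.trans hwδ).le⟩
    have hmem2 : ξ₂ ∈ Ioc (0:ℝ) δ := ⟨hu.1.trans (huw.trans hξ₂.1), hξ₂.2.le⟩
    have hlt : deriv (deriv (deriv f)) ξ₂ - 6*A < deriv (deriv (deriv f)) ξ₁ - 6*A := by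
      have := hanti hmem1 hmem2 (hξ₁.2.trans hξ₂.1)
      linarith
    rw [h1, h2, hE2δ] at hlt
    rw [div_lt_div_iff₀ (by linarith) (by linarith)] at hlt
    nlinarith [hlt]
  -- E2 is positive on (0, δ)
  have hpos : ∀ w ∈ Ioo (0:ℝ) δ, 0 < E2 w := by
    induction L using EReal.rec with
    | bot => intro w hw; exact absurd (le_bot_iff.mp hcon) (EReal.coe_ne_bot g2)
    | top =>
      -- f'' tends to +∞, so E2 is eventually positive near 0
      intro w hw
      have hev : ∀ᶠ u in nhdsWithin 0 (Ioi 0),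
          ((6 * |A| * δ + 2 * B : ℝ) : EReal) < ((deriv (deriv f) u : ℝ) : EReal) :=
        (EReal.tendsto_nhds_top_iff_real.mp hL) (6 * |A| * δ + 2 * B)
      have hev2 : ∀ᶠ u in nhdsWithin 0 (Ioi 0), u ∈ Ioo (0:ℝ) w := by
        filter_upwards [eventually_mem_nhdsWithin,
          (eventually_lt_nhds hw.1).filter_mono nhdsWithin_le_nhds] with u h1 h2
        exact ⟨h1, h2⟩
      obtain ⟨u, hu1, hu2⟩ := (hev.and hev2).exists
      have hu3 : u ∈ Ioo (0:ℝ) δ := ⟨hu2.1, hu2.2.trans hw.2⟩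
      have hfu : 6 * |A| * δ + 2 * B < deriv (deriv f) u := by exact_mod_cast hu1
      have hE2u : 0 < E2 u := by
        have h1 : 6*A*u ≤ 6 * |A| * u := by nlinarith [le_abs_self A, hu3.1.le]
        have h2 : 6 * |A| * u ≤ 6 * |A| * δ := by nlinarith [abs_nonneg A, hu3.2.le]
        simp only [hE2]; linarith
      have hchord := chord u hu3 w ⟨hu2.2, hw.2⟩
      have hδu : 0 < δ - u := by linarith [hu3.2]
      have h1 : 0 < E2 u * (δ - w) := mul_pos hE2u (by linarith [hw.2])
      nlinarith [hchord, h1, hδu]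
    | coe l =>
      have hl : g2 ≤ l := by exact_mod_cast hcon
      have htd : Tendsto (fun u => deriv (deriv f) u) (nhdsWithin 0 (Ioi 0)) (nhds l) :=
        EReal.tendsto_coe.mp hL
      -- first: E2 is nonneg on (0,δ)
      have hnn : ∀ w ∈ Ioo (0:ℝ) δ, 0 ≤ E2 w := by
        intro w hw
        have htE2 : Tendsto (fun u => E2 u * (δ - w)) (nhdsWithin 0 (Ioi 0))
            (nhds ((l - 2*B) * (δ - w))) := by
          have hpoly : Tendsto (fun u : ℝ => 6*A*u + 2*B) (nhdsWithin 0 (Ioi 0))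
              (nhds (2*B)) := by
            have : Tendsto (fun u : ℝ => 6*A*u + 2*B) (nhds 0) (nhds (6*A*0 + 2*B)) :=
              (Continuous.tendsto (by fun_prop) 0)
            simpa using this.mono_left nhdsWithin_le_nhds
          exact (htd.sub hpoly).mul_const _
        have htconst : Tendsto (fun u : ℝ => E2 w * (δ - u)) (nhdsWithin 0 (Ioi 0))
            (nhds (E2 w * δ)) := by
          have : Tendsto (fun u : ℝ => E2 w * (δ - u)) (nhds 0) (nhds (E2 w * (δ - 0))) :=
            (Continuous.tendsto (by fun_prop) 0)
          simpa using this.mono_left nhdsWithin_le_nhds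
        have hev : ∀ᶠ u in nhdsWithin 0 (Ioi 0), E2 u * (δ - w) ≤ E2 w * (δ - u) := by
          filter_upwards [eventually_mem_nhdsWithin,
            (eventually_lt_nhds hw.1).filter_mono nhdsWithin_le_nhds] with u h1 h2
          exact (chord u ⟨h1, h2.trans hw.2⟩ w ⟨h2, hw.2⟩).le
        have hle := le_of_tendsto_of_tendsto htE2 htconst hev
        have h2B : 2*B = g2 := by rw [hB]; ring
        have hnn1 : 0 ≤ (l - 2*B) * (δ - w) :=
          mul_nonneg (by linarith) (by linarith [hw.2])
        nlinarith [hle, hnn1, hδ]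
      -- then strict positivity via the strict chord inequality
      intro w hw
      have hu1 : w/2 ∈ Ioo (0:ℝ) δ := ⟨by linarith [hw.1], by linarith [hw.1, hw.2]⟩
      have h := chord (w/2) hu1 w ⟨by linarith [hw.1], hw.2⟩
      have h2 := hnn (w/2) hu1
      have p1 : 0 ≤ E2 (w/2) * (δ - w) := mul_nonneg h2 (by linarith [hw.2])
      have p2 : 0 < E2 w * (δ - w/2) := lt_of_le_of_lt p1 h
      have p3 : (0:ℝ) < δ - w/2 := by linarith [hu1.2]
      by_contra hneg
      push_neg at hneg
      have p4 : 0 ≤ (-E2 w) * (δ - w/2) := mul_nonneg (by linarith) p3.le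
      nlinarith [p2, p4]
  -- E1 is strictly monotone on (0, δ], hence negative on (0, δ)
  have hmono1 : StrictMonoOn E1 (Ioc 0 δ) := by
    apply strictMonoOn_of_deriv_pos (convex_Ioc 0 δ) hC1
    intro x hx
    rw [interior_Ioc] at hx
    rw [(hD1 x hx).deriv]
    exact hpos x hx
  have hE1neg : ∀ w ∈ Ioo (0:ℝ) δ, E1 w < 0 := by
    intro w hw
    have := hmono1 ⟨hw.1, hw.2.le⟩ ⟨hδ, le_refl δ⟩ hw.2
    rwa [hE1δ] at this
  -- E0 is strictly antitone on (0, δ], hence positive on (0, δ)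
  have hanti0 : StrictAntiOn E0 (Ioc 0 δ) := by
    apply strictAntiOn_of_deriv_neg (convex_Ioc 0 δ) (hC0Icc.mono Ioc_subset_Icc_self)
    intro x hx
    rw [interior_Ioc] at hx
    rw [(hD0 x hx).deriv]
    exact hE1neg x hx
  have hE0pos : ∀ w ∈ Ioo (0:ℝ) δ, 0 < E0 w := by
    intro w hw
    have := hanti0 ⟨hw.1, hw.2.le⟩ ⟨hδ, le_refl δ⟩ hw.2
    rwa [hE0δ] at this
  -- contradiction at 0: E0 is continuous at 0, E0 0 = 0, but E0 ≥ E0 (δ/2) > 0 near 0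
  have hw0 : (δ/2) ∈ Ioo (0:ℝ) δ := ⟨by positivity, by linarith⟩
  haveI : (nhdsWithin (0:ℝ) (Ioo 0 δ)).NeBot := by
    rw [← mem_closure_iff_nhdsWithin_neBot, closure_Ioo hδ0.symm]
    exact ⟨le_refl 0, hδ.le⟩
  have htend : Tendsto E0 (nhdsWithin 0 (Ioo 0 δ)) (nhds (E0 0)) :=
    (hC0Icc 0 ⟨le_refl 0, hδ.le⟩).mono_left (nhdsWithin_mono _ Ioo_subset_Icc_self)
  have hev : ∀ᶠ u in nhdsWithin 0 (Ioo 0 δ), E0 (δ/2) ≤ E0 u := by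
    filter_upwards [eventually_mem_nhdsWithin,
      (eventually_lt_nhds hw0.1).filter_mono nhdsWithin_le_nhds] with u h1 h2
    exact (hanti0 ⟨h1.1, h1.2.le⟩ ⟨hw0.1, hw0.2.le⟩ h2).le
  have hle := ge_of_tendsto htend hev
  have hE00 : E0 0 = 0 := by simp [hE0, hf0]
  rw [hE00] at hle
  exact absurd (hE0pos _ hw0) (by linarith)
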